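/- Let 0 < λ ≤ Λ, β = (Λ/λ)(N−1)+1, and let u^δ(x) = C_δ(1+|x|²)^{-δ/2} with δ, C_δ > 0. Then for every x ∈ ℝ^N, the Pucci maximal operator satisfies M⁺_{λ,Λ}(D²u^δ(x)) ≥ C_δ δ λ (β−δ−2)/(1+|x|²)^{δ/2+1}. -/

import Mathlib

open Matrix Real Filter
open scoped RealInnerProductSpace

/-- Pucci maximal operator `M⁺_{λ,Λ}(M) = sup_{λI ≤ A ≤ ΛI} -Tr(A M)`. -/
noncomputable def pucciSup {N : ℕ} (lam Lam : ℝ) (M : Matrix (Fin N) (Fin N) ℝ) : ℝ :=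
  sSup {t : ℝ | ∃ A : Matrix (Fin N) (Fin N) ℝ, A.IsSymm ∧
    (A - lam • (1 : Matrix (Fin N) (Fin N) ℝ)).PosSemidef ∧
    (Lam • (1 : Matrix (Fin N) (Fin N) ℝ) - A).PosSemidef ∧
    t = -(A * M).trace}

/-- Pucci minimal operator `M⁻_{λ,Λ}(M) = inf_{λI ≤ A ≤ ΛI} -Tr(A M)`. -/
noncomputable def pucciInf {N : ℕ} (lam Lam : ℝ) (M : Matrix (Fin N) (Fin N) ℝ) : ℝ :=
  sInf {t : ℝ | ∃ A : Matrix (Fin N) (Fin N) ℝ, A.IsSymm ∧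
    (A - lam • (1 : Matrix (Fin N) (Fin N) ℝ)).PosSemidef ∧
    (Lam • (1 : Matrix (Fin N) (Fin N) ℝ) - A).PosSemidef ∧
    t = -(A * M).trace}

/-- Hessian matrix of `u : ℝ^N → ℝ` at `x`. -/
noncomputable def hess {N : ℕ} (u : EuclideanSpace ℝ (Fin N) → ℝ)
    (x : EuclideanSpace ℝ (Fin N)) : Matrix (Fin N) (Fin N) ℝ :=
  fun i j => iteratedFDeriv ℝ 2 u x ![EuclideanSpace.single i 1, EuclideanSpace.single j 1]

section Aux

theorem hess_formula_aux {N : ℕ} (C p : ℝ) (x : EuclideanSpace ℝ (Fin N)) (i j : Fin N) :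
    hess (fun y => C * (1 + ‖y‖^2) ^ p) x i j =
    (4*C*p*(p-1)*(1+‖x‖^2)^(p-2)) * (x i * x j)
      + (2*C*p*(1+‖x‖^2)^(p-1)) * (if i = j then 1 else 0) := by
  have hg : ∀ y : EuclideanSpace ℝ (Fin N), (0:ℝ) < 1 + ‖y‖^2 := by
    intro y; positivity
  set f : EuclideanSpace ℝ (Fin N) → ℝ := fun y => C * (1 + ‖y‖^2) ^ p with hf
  have hchain : ∀ (c q : ℝ) (y : EuclideanSpace ℝ (Fin N)),
      HasFDerivAt (fun z : EuclideanSpace ℝ (Fin N) => c * (1+‖z‖^2)^q)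
      ((c * (q * (1+‖y‖^2)^(q-1))) • (2 • innerSL ℝ y : EuclideanSpace ℝ (Fin N) →L[ℝ] ℝ)) y := by
    intro c q y
    have h1 : HasFDerivAt (fun z : EuclideanSpace ℝ (Fin N) => 1 + ‖z‖^2)
        (2 • innerSL ℝ y : EuclideanSpace ℝ (Fin N) →L[ℝ] ℝ) y := by
      simpa using ((hasFDerivAt_id y).norm_sq).const_add 1
    have h2 : HasDerivAt (fun t : ℝ => t ^ q) (q * (1+‖y‖^2) ^ (q-1)) (1+‖y‖^2) :=
      Real.hasDerivAt_rpow_const (Or.inl (hg y).ne')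
    simpa [Function.comp_def, smul_smul] using (h2.comp_hasFDerivAt y h1).const_mul c
  have hfderiv : ∀ y : EuclideanSpace ℝ (Fin N), fderiv ℝ f y
      = (C * (p * (1+‖y‖^2)^(p-1))) • (2 • innerSL ℝ y : EuclideanSpace ℝ (Fin N) →L[ℝ] ℝ) :=
    fun y => (hchain C p y).fderiv
  have hcd : ContDiffAt ℝ 2 f x :=
    contDiffAt_const.mul ((Real.contDiffAt_rpow_const_of_ne (hg x).ne').comp x
      ((contDiff_const.add (contDiff_norm_sq ℝ)).contDiffAt))
  have hDiff : DifferentiableAt ℝ (fderiv ℝ f) x :=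
    (hcd.fderiv_right (m := 1) (by norm_num)).differentiableAt (by norm_num)
  set e : Fin N → EuclideanSpace ℝ (Fin N) := fun k => EuclideanSpace.single k 1 with he
  have h0 : hess f x i j = fderiv ℝ (fderiv ℝ f) x (e i) (e j) := by
    rw [hess, iteratedFDeriv_two_apply]
    simp [he]
  set D := fderiv ℝ (fderiv ℝ f) x with hD
  have hA : HasFDerivAt (fun y => fderiv ℝ f y (e j))
      ((ContinuousLinearMap.apply ℝ ℝ (e j)).comp D) x :=
    (ContinuousLinearMap.apply ℝ ℝ (e j)).hasFDerivAt.comp x hDiff.hasFDerivAt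
  have hinner : ∀ (y : EuclideanSpace ℝ (Fin N)) (k : Fin N),
      ⟪y, EuclideanSpace.single k (1:ℝ)⟫ = y k := by
    intro y k
    rw [real_inner_comm]
    simp [EuclideanSpace.inner_single_left]
  have hfun : (fun y => fderiv ℝ f y (e j))
      = fun y : EuclideanSpace ℝ (Fin N) => (2*C*p) * ((1+‖y‖^2)^(p-1) * y j) := by
    funext y
    rw [hfderiv y]
    simp [he, hinner]
    ring
  have h3 : HasFDerivAt (fun y : EuclideanSpace ℝ (Fin N) => (1+‖y‖^2)^(p-1))
      (((p-1) * (1+‖x‖^2)^(p-2)) • (2 • innerSL ℝ x : EuclideanSpace ℝ (Fin N) →L[ℝ] ℝ)) x := by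
    have := hchain 1 (p-1) x
    rw [show p-1-1 = p-2 by ring] at this
    simpa using this
  have h4 : HasFDerivAt (fun y : EuclideanSpace ℝ (Fin N) => y j)
      (EuclideanSpace.proj (𝕜 := ℝ) j) x :=
    (EuclideanSpace.proj (𝕜 := ℝ) j).hasFDerivAt
  have hB : HasFDerivAt (fun y : EuclideanSpace ℝ (Fin N) => (2*C*p) * ((1+‖y‖^2)^(p-1) * y j))
      ((2*C*p) • (((1+‖x‖^2)^(p-1)) • (EuclideanSpace.proj (𝕜 := ℝ) j)
        + (x j) • (((p-1) * (1+‖x‖^2)^(p-2)) • (2 • innerSL ℝ x : EuclideanSpace ℝ (Fin N) →L[ℝ] ℝ)))) x :=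
    (h3.mul h4).const_mul (2*C*p)
  have huniq : (ContinuousLinearMap.apply ℝ ℝ (e j)).comp D
      = (2*C*p) • (((1+‖x‖^2)^(p-1)) • (EuclideanSpace.proj (𝕜 := ℝ) j)
        + (x j) • (((p-1) * (1+‖x‖^2)^(p-2)) • (2 • innerSL ℝ x : EuclideanSpace ℝ (Fin N) →L[ℝ] ℝ))) := by
    apply hA.unique
    rw [hfun]
    exact hB
  have hval : D (e i) (e j) = ((ContinuousLinearMap.apply ℝ ℝ (e j)).comp D) (e i) := rfl
  rw [h0, hval, huniq]
  simp [he, hinner, EuclideanSpace.single_apply]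
  rcases eq_or_ne i j with h | h
  · subst h; simp; ring
  · simp [h, Ne.symm h]; ring

lemma qform_single_aux {N : ℕ} (B : Matrix (Fin N) (Fin N) ℝ) (i j : Fin N) (c : ℝ) :
    star (Pi.single i (1:ℝ) + c • (Pi.single j 1 : Fin N → ℝ)) ⬝ᵥ
      B *ᵥ (Pi.single i (1:ℝ) + c • (Pi.single j 1 : Fin N → ℝ))
    = B i i + c * B i j + c * B j i + c * c * B j j := by
  simp [Matrix.mulVec_add, Matrix.mulVec_smul, dotProduct_add, dotProduct_smul,
    add_dotProduct, smul_dotProduct, Matrix.mulVec_single, single_dotProduct,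
    smul_eq_mul]
  ring

lemma entry_bound_aux {N : ℕ} {lam Lam : ℝ} (hlam : 0 < lam)
    {A : Matrix (Fin N) (Fin N) ℝ} (hsym : A.IsSymm)
    (h1 : (A - lam • (1 : Matrix (Fin N) (Fin N) ℝ)).PosSemidef)
    (h2 : (Lam • (1 : Matrix (Fin N) (Fin N) ℝ) - A).PosSemidef)
    (i j : Fin N) : |A i j| ≤ Lam := by
  have hApsd : ∀ v : Fin N → ℝ, 0 ≤ star v ⬝ᵥ A *ᵥ v := by
    intro v
    have h0 := h1.dotProduct_mulVec_nonneg v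
    have h2' : star v ⬝ᵥ (A - lam • (1 : Matrix (Fin N) (Fin N) ℝ)) *ᵥ v
        = star v ⬝ᵥ A *ᵥ v - lam * (star v ⬝ᵥ (1 : Matrix (Fin N) (Fin N) ℝ) *ᵥ v) := by
      simp [Matrix.sub_mulVec, dotProduct_sub, Matrix.smul_mulVec]
    have h3 : (0:ℝ) ≤ star v ⬝ᵥ (1 : Matrix (Fin N) (Fin N) ℝ) *ᵥ v := by
      simp only [Matrix.one_mulVec, dotProduct, star_trivial, Pi.star_apply]
      exact Finset.sum_nonneg fun _ _ => mul_self_nonneg _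
    nlinarith
  have hdiag : ∀ k, A k k ≤ Lam := by
    intro k
    have h0 := h2.dotProduct_mulVec_nonneg (Pi.single k 1)
    simp only [Matrix.sub_mulVec, Matrix.smul_mulVec, Matrix.one_mulVec,
      dotProduct_sub, dotProduct_smul, Matrix.mulVec_single, single_dotProduct,
      star_trivial, smul_eq_mul, mul_one] at h0
    simp [Pi.single_apply] at h0
    linarith
  have hq : ∀ c : ℝ, 0 ≤ A i i + c * A i j + c * A j i + c * c * A j j := by
    intro c
    have := hApsd (Pi.single i 1 + c • (Pi.single j 1 : Fin N → ℝ))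
    rwa [qform_single_aux] at this
  have hsymm : A j i = A i j := hsym.apply i j
  have hd1 := hdiag i
  have hd2 := hdiag j
  have hp := hq 1
  have hm := hq (-1)
  rw [abs_le]
  constructor <;> nlinarith

end Aux

set_option maxHeartbeats 1000000 in
/-- for `u^δ(x) = C_δ(1+|x|²)^{-δ/2}` one has
`M⁺_{λ,Λ}(D²u^δ(x)) ≥ C_δ δ λ (β−δ−2)/(1+|x|²)^{δ/2+1}`, where `β = (Λ/λ)(N−1)+1`. -/
theorem stmt1 {N : ℕ} (lam Lam β δ C : ℝ) (hlam : 0 < lam) (hle : lam ≤ Lam)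
    (hβ : β = Lam / lam * (N - 1) + 1) (hδ : 0 < δ) (hC : 0 < C)
    (u : EuclideanSpace ℝ (Fin N) → ℝ)
    (hu : ∀ x : EuclideanSpace ℝ (Fin N), u x = C * (1 + ‖x‖ ^ 2) ^ (-(δ / 2))) :
    ∀ x : EuclideanSpace ℝ (Fin N),
      pucciSup lam Lam (hess u x) ≥
        C * δ * lam * (β - δ - 2) / (1 + ‖x‖ ^ 2) ^ (δ / 2 + 1) := by
  have hu' : u = fun x => C * (1 + ‖x‖ ^ 2) ^ (-(δ / 2)) := funext hu
  subst hu'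
  intro x
  -- basic notation
  set p : ℝ := -(δ/2) with hp
  set x' : Fin N → ℝ := fun i => x i with hx'
  set s : ℝ := ‖x‖^2 with hsdef
  have hs : s = ∑ i, x' i ^ 2 := by
    rw [hsdef, EuclideanSpace.norm_eq, Real.sq_sqrt (by positivity)]
    simp [hx', Real.norm_eq_abs, sq_abs]
  have hs0 : 0 ≤ s := by rw [hsdef]; positivity
  have hP : (0:ℝ) < 1 + s := by linarith
  set k : ℝ := Lam - lam with hk
  have hk0 : 0 ≤ k := by rw [hk]; linarith
  set V : Matrix (Fin N) (Fin N) ℝ := Matrix.vecMulVec x' x' with hV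
  set a : ℝ := 2*C*p*(1+s)^(p-1) with ha
  set b : ℝ := 4*C*p*(p-1)*(1+s)^(p-2) with hb
  set M : Matrix (Fin N) (Fin N) ℝ :=
    hess (fun x => C * (1 + ‖x‖ ^ 2) ^ (-(δ / 2))) x with hM
  have hMmat : M = a • (1 : Matrix (Fin N) (Fin N) ℝ) + b • V := by
    ext i j
    rw [hM]
    rw [hess_formula_aux C p x i j]
    simp [Matrix.add_apply, Matrix.smul_apply, Matrix.one_apply, hV, Matrix.vecMulVec_apply,
      smul_eq_mul, ha, hb, hx', hsdef]
    ring_nf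
  set A : Matrix (Fin N) (Fin N) ℝ :=
    Lam • (1 : Matrix (Fin N) (Fin N) ℝ) - (k/s) • V with hA
  clear_value p x' s k V a b M A
  -- symmetry of A
  have hVsymm : ∀ i j, V j i = V i j := by
    intro i j; simp [hV, Matrix.vecMulVec_apply]; ring
  have hAsymm : A.IsSymm := by
    unfold Matrix.IsSymm
    ext i j
    simp [hA, Matrix.transpose_apply, Matrix.sub_apply, Matrix.smul_apply, Matrix.one_apply,
      hVsymm i j]
    rcases eq_or_ne i j with h | h
    · subst h; ring
    · simp [h, Ne.symm h, hVsymm i j]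
  -- quadratic form of V
  have hVq : ∀ v : Fin N → ℝ, v ⬝ᵥ V *ᵥ v = (∑ i, x' i * v i)^2 := by
    intro v
    simp only [hV, dotProduct, Matrix.mulVec, Matrix.vecMulVec_apply]
    rw [sq, Finset.sum_mul_sum]
    refine Finset.sum_congr rfl fun i _ => ?_
    rw [Finset.mul_sum]
    exact Finset.sum_congr rfl fun j _ => by ring
  -- quadratic form of 1
  have h1q : ∀ v : Fin N → ℝ, v ⬝ᵥ (1 : Matrix (Fin N) (Fin N) ℝ) *ᵥ v = ∑ i, v i^2 := by
    intro v; simp [Matrix.one_mulVec, dotProduct, sq]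
  have hherm : ∀ (c d : ℝ), (c • (1:Matrix (Fin N) (Fin N) ℝ) + d • V).IsHermitian := by
    intro c d
    ext i j
    simp only [Matrix.conjTranspose_apply, Matrix.add_apply, Matrix.smul_apply, Matrix.one_apply,
      hV, Matrix.vecMulVec_apply, smul_eq_mul, star_trivial]
    rcases eq_or_ne i j with h | h
    · subst h; ring
    · rw [if_neg h, if_neg (Ne.symm h)]; ring
  have hA1eq : A - lam • (1 : Matrix (Fin N) (Fin N) ℝ)
      = k • (1 : Matrix (Fin N) (Fin N) ℝ) + (-(k/s)) • V := by
    rw [hA, hk]; module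
  have hA2eq : Lam • (1 : Matrix (Fin N) (Fin N) ℝ) - A
      = (0:ℝ) • (1 : Matrix (Fin N) (Fin N) ℝ) + (k/s) • V := by
    rw [hA]; module
  have hq1 : ∀ (c d : ℝ) (v : Fin N → ℝ),
      star v ⬝ᵥ (c • (1:Matrix (Fin N) (Fin N) ℝ) + d • V) *ᵥ v
        = c * (∑ i, v i^2) + d * (∑ i, x' i * v i)^2 := by
    intro c d v
    simp only [star_trivial, Matrix.add_mulVec, Matrix.smul_mulVec, dotProduct_add,
      dotProduct_smul, smul_eq_mul, h1q, hVq]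
  have hA1 : (A - lam • (1 : Matrix (Fin N) (Fin N) ℝ)).PosSemidef := by
    rw [hA1eq]
    refine Matrix.PosSemidef.of_dotProduct_mulVec_nonneg (hherm _ _) ?_
    intro v
    rw [hq1]
    rcases eq_or_ne s 0 with h0 | h0
    · rw [h0]
      simp only [div_zero, neg_zero, zero_mul, add_zero]
      exact mul_nonneg hk0 (Finset.sum_nonneg fun i _ => sq_nonneg _)
    · have hspos : 0 < s := lt_of_le_of_ne hs0 (Ne.symm h0)
      have hcs : (∑ i, x' i * v i)^2 ≤ s * ∑ i, v i^2 := by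
        rw [hs]
        exact Finset.sum_mul_sq_le_sq_mul_sq Finset.univ x' v
      have h2 : (k/s) * (∑ i, x' i * v i)^2 ≤ (k/s) * (s * ∑ i, v i^2) :=
        mul_le_mul_of_nonneg_left hcs (div_nonneg hk0 hs0)
      have h3 : (k/s) * (s * ∑ i, v i^2) = k * ∑ i, v i^2 := by
        field_simp
      nlinarith
  have hA2 : (Lam • (1 : Matrix (Fin N) (Fin N) ℝ) - A).PosSemidef := by
    rw [hA2eq]
    refine Matrix.PosSemidef.of_dotProduct_mulVec_nonneg (hherm _ _) ?_
    intro v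
    rw [hq1]
    simp only [zero_mul, zero_add]
    exact mul_nonneg (div_nonneg hk0 hs0) (sq_nonneg _)
  -- trace computation
  have hVV : V * V = s • V := by
    ext i j
    simp only [hV, Matrix.mul_apply, Matrix.vecMulVec_apply, Matrix.smul_apply, smul_eq_mul]
    have h2 : ∀ l, (x' i * x' l) * (x' l * x' j) = x' l^2 * (x' i * x' j) := fun l => by ring
    simp_rw [h2]
    rw [← Finset.sum_mul, ← hs]
  have htrV : V.trace = s := by
    simp only [Matrix.trace, Matrix.diag_apply, hV, Matrix.vecMulVec_apply]
    rw [hs]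
    exact Finset.sum_congr rfl fun i _ => (sq (x' i)).symm
  have htr1 : (1 : Matrix (Fin N) (Fin N) ℝ).trace = (N:ℝ) := by
    simp [Matrix.trace_one]
  have hAM : A * M = (Lam*a) • (1 : Matrix (Fin N) (Fin N) ℝ)
      + (Lam*b - (k/s)*a - (k/s)*(b*s)) • V := by
    rw [hA, hMmat]
    simp only [Matrix.sub_mul, Matrix.mul_add, Matrix.smul_mul, Matrix.mul_smul,
      Matrix.one_mul, Matrix.mul_one, hVV, smul_smul]
    module
  have htrace : (A * M).trace = Lam*a*(N:ℝ) + (Lam*b - (k/s)*a - (k/s)*(b*s))*s := by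
    rw [hAM, Matrix.trace_add, Matrix.trace_smul, Matrix.trace_smul, htrV, htr1,
      smul_eq_mul, smul_eq_mul]
  -- the sup is bounded above and contains our candidate value
  have hbdd : BddAbove {t : ℝ | ∃ A' : Matrix (Fin N) (Fin N) ℝ, A'.IsSymm ∧
      (A' - lam • (1 : Matrix (Fin N) (Fin N) ℝ)).PosSemidef ∧
      (Lam • (1 : Matrix (Fin N) (Fin N) ℝ) - A').PosSemidef ∧
      t = -(A' * M).trace} := by
    refine ⟨∑ i, ∑ j, Lam * |M j i|, ?_⟩
    rintro t ⟨A', hs', h1', h2', rfl⟩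
    have htr' : (A' * M).trace = ∑ i, ∑ j, A' i j * M j i := by
      simp [Matrix.trace, Matrix.diag_apply, Matrix.mul_apply]
    rw [htr']
    calc -(∑ i, ∑ j, A' i j * M j i) ≤ |∑ i, ∑ j, A' i j * M j i| := neg_le_abs _
      _ ≤ ∑ i, ∑ j, |A' i j * M j i| := by
          refine (Finset.abs_sum_le_sum_abs _ _).trans ?_
          exact Finset.sum_le_sum fun i _ => Finset.abs_sum_le_sum_abs _ _
      _ ≤ ∑ i, ∑ j, Lam * |M j i| := by
          refine Finset.sum_le_sum fun i _ => Finset.sum_le_sum fun j _ => ?_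
          rw [abs_mul]
          exact mul_le_mul_of_nonneg_right (entry_bound_aux hlam hs' h1' h2' i j) (abs_nonneg _)
  have hmem : -(A * M).trace ∈ {t : ℝ | ∃ A' : Matrix (Fin N) (Fin N) ℝ, A'.IsSymm ∧
      (A' - lam • (1 : Matrix (Fin N) (Fin N) ℝ)).PosSemidef ∧
      (Lam • (1 : Matrix (Fin N) (Fin N) ℝ) - A').PosSemidef ∧
      t = -(A' * M).trace} := ⟨A, hAsymm, hA1, hA2, rfl⟩
  have hsup : -(A * M).trace ≤ pucciSup lam Lam M := le_csSup hbdd hmem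
  -- final numerical inequality
  have hβlam : lam * β = Lam * ((N:ℝ) - 1) + lam := by
    rw [hβ]; field_simp
  have hE : (0:ℝ) < (1+s)^(p-2) := Real.rpow_pos_of_pos hP _
  have hPE : (1+s)^(p-1) = (1+s)^(p-2) * (1+s) := by
    rw [← Real.rpow_add_one hP.ne' (p-2)]
    congr 1
    ring
  have hgoalL : C*δ*lam*(β-δ-2) / (1+s)^(δ/2+1) = C*δ*lam*(β-δ-2) * ((1+s)^(p-1)) := by
    rw [div_eq_mul_inv, ← Real.rpow_neg hP.le, show -(δ/2+1) = p-1 by rw [hp]; ring]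
  have hfinal : C * δ * lam * (β - δ - 2) / (1 + s) ^ (δ / 2 + 1) ≤ -(A * M).trace := by
    rw [htrace, hgoalL]
    rcases eq_or_ne s 0 with h0 | h0
    · have h1 : lam*(β-δ-2) ≤ Lam*(N:ℝ) := by nlinarith [hβlam]
      rw [ha, hb, h0]
      norm_num [Real.one_rpow, hp]
      linarith [mul_le_mul_of_nonneg_left h1 (le_of_lt (mul_pos hC hδ))]
    · have hsr : (Lam*b - (k/s)*a - (k/s)*(b*s))*s = Lam*b*s - k*a - k*(b*s) := by
        field_simp
      rw [hsr, ha, hb, hPE, hp]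
      have hkey : -(Lam*(2*C*(-(δ/2))*((1+s)^((-(δ/2))-2) * (1+s)))*(N:ℝ)
            + (Lam*(4*C*(-(δ/2))*((-(δ/2))-1)*(1+s)^((-(δ/2))-2))*s
              - k*(2*C*(-(δ/2))*((1+s)^((-(δ/2))-2) * (1+s)))
              - k*(4*C*(-(δ/2))*((-(δ/2))-1)*(1+s)^((-(δ/2))-2)*s)))
            - C*δ*lam*(β-δ-2)*((1+s)^((-(δ/2))-2) * (1+s))
          = C*δ*lam*(δ+2)*((1+s)^((-(δ/2))-2)) := by
        rw [hk]
        linear_combination (-(C*δ*(1+s)^((-(δ/2))-2)*(1+s)))*hβlam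
      have hpos : 0 ≤ C*δ*lam*(δ+2)*((1+s)^((-(δ/2))-2)) :=
        le_of_lt (mul_pos (mul_pos (mul_pos (mul_pos hC hδ) hlam)
          (by linarith : (0:ℝ) < δ+2)) (Real.rpow_pos_of_pos hP _))
      linarith [hkey, hpos]
  exact le_trans hfinal hsup
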